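/- Let M ≥ 1, let W be a real random variable with W > 0 almost surely, and let (T_j)_{j=1}^M, (X_j)_{j=1}^M be random variables such that T_j is exponentially distributed with mean μ_j > 0, X_j is exponentially distributed with mean λ_j > 0, and W, T₁, X₁, …, T_M, X_M are mutually independent. Let η, ρ, a, u > 0. Then ℙ( max_{1≤j≤M} η·ρ·T_j·W/(a·ρ·X_j + 1) > u ) = 1 − 𝔼[ ∏_{j=1}^M ( 1 − ( η·μ_j·W/(η·μ_j·W + a·λ_j·u) ) · exp( −u/(η·ρ·μ_j·W) ) ) ]. -/

import Mathlib

open MeasureTheory ProbabilityTheory Real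

/-- A real random variable `X` is exponentially distributed with mean `lam > 0` if its law has
density `(1/lam) * exp (-x/lam)` on `[0, ∞)` and `0` on `(-∞, 0)`. -/
def HasExpLaw {Ω : Type*} [MeasurableSpace Ω] (P : Measure Ω) (X : Ω → ℝ) (lam : ℝ) : Prop :=
  Measurable X ∧
    P.map X = MeasureTheory.volume.withDensity
      (fun x => ENNReal.ofReal (if 0 ≤ x then (1 / lam) * Real.exp (-x / lam) else 0))

open Set

lemma expPDF_eq_exponentialPDF (lam : ℝ) :
    (fun x => ENNReal.ofReal (if 0 ≤ x then (1 / lam) * Real.exp (-x / lam) else 0))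
      = ProbabilityTheory.exponentialPDF (1/lam) := by
  funext x
  rw [exponentialPDF_eq]
  congr 1
  split_ifs with h
  · rw [show -(1/lam * x) = -x/lam by ring]
  · rfl

lemma integral_exp_neg_mul_Ioi_zero {b : ℝ} (hb : 0 < b) :
    ∫ x in Ioi (0:ℝ), Real.exp (-(b*x)) = b⁻¹ := by
  rw [show (fun x => Real.exp (-(b*x))) = (fun x => Real.exp (-x)) ∘ (fun x => b * x) from rfl]
  have := integral_comp_mul_left_Ioi (fun x => Real.exp (-x)) 0 hb
  simp only [mul_zero] at this
  rw [Function.comp_def, this, integral_exp_neg_Ioi_zero, smul_eq_mul, mul_one]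


lemma exp_lintegral {lam β γ : ℝ} (hlam : 0 < lam) (hβ : 0 ≤ β) (hγ : 0 ≤ γ) :
    ∫⁻ x, ENNReal.ofReal (1 - Real.exp (-(γ + β*x)))
        ∂(MeasureTheory.volume.withDensity (exponentialPDF (1/lam)))
      = ENNReal.ofReal (1 - Real.exp (-γ) * (1 + β*lam)⁻¹) := by
  set r : ℝ := 1/lam with hr_def
  have hr : 0 < r := by positivity
  have hG : Measurable fun x : ℝ => ENNReal.ofReal (1 - Real.exp (-(γ + β*x))) := by
    fun_prop
  have hd : Measurable (exponentialPDF r) := by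
    have : exponentialPDF r = fun x => ENNReal.ofReal (if 0 ≤ x then r * Real.exp (-(r*x)) else 0) := by
      funext x; rw [exponentialPDF_eq]
    rw [this]
    exact (Measurable.ite (measurableSet_le measurable_const measurable_id)
      (by fun_prop) measurable_const).ennreal_ofReal
  rw [lintegral_withDensity_eq_lintegral_mul _ hd hG]
  have hfac : ∀ x : ℝ, 0 ≤ x → Real.exp (-(γ + β*x)) ≤ 1 := by
    intro x hx; rw [Real.exp_le_one_iff]; nlinarith
  have hpt : ∀ x : ℝ, (exponentialPDF r * fun x => ENNReal.ofReal (1 - Real.exp (-(γ + β*x)))) x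
      = ENNReal.ofReal (Set.indicator (Ici 0)
          (fun x => r * Real.exp (-(r*x)) * (1 - Real.exp (-(γ + β*x)))) x) := by
    intro x
    simp only [Pi.mul_apply, exponentialPDF_eq, Set.indicator, mem_Ici]
    split_ifs with h
    · rw [← ENNReal.ofReal_mul (by positivity)]
    · simp
  simp only [hpt]
  have hint1 : IntegrableOn (fun x => Real.exp (-(r*x))) (Ioi (0:ℝ)) := by
    have := exp_neg_integrableOn_Ioi 0 hr
    simpa only [neg_mul] using this
  have hint1' : IntegrableOn (fun x => r * Real.exp (-(r*x))) (Ioi (0:ℝ)) := hint1.const_mul r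
  have hrb : 0 < r + β := by positivity
  have hint2 : IntegrableOn (fun x => Real.exp (-((r+β)*x))) (Ioi (0:ℝ)) := by
    have := exp_neg_integrableOn_Ioi 0 hrb
    simpa only [neg_mul] using this
  have hint2' : IntegrableOn (fun x => (r * Real.exp (-γ)) * Real.exp (-((r+β)*x))) (Ioi (0:ℝ)) :=
    hint2.const_mul _
  have hcont : Continuous fun x => r * Real.exp (-(r*x)) * (1 - Real.exp (-(γ + β*x))) := by
    fun_prop
  have hIoiOn : IntegrableOn (fun x => r * Real.exp (-(r*x)) * (1 - Real.exp (-(γ + β*x))))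
      (Ioi (0:ℝ)) := by
    refine Integrable.mono' hint1' hcont.aestronglyMeasurable ?_
    filter_upwards [ae_restrict_mem measurableSet_Ioi] with x hx
    have hx0 : (0:ℝ) ≤ x := le_of_lt hx
    have h1 : 0 ≤ Real.exp (-(γ + β*x)) := (Real.exp_pos _).le
    have h2 := hfac x hx0
    have h3 : 0 ≤ r * Real.exp (-(r*x)) := by positivity
    rw [Real.norm_eq_abs, abs_of_nonneg (mul_nonneg h3 (by linarith))]
    exact mul_le_of_le_one_right h3 (by linarith)
  have hOn : IntegrableOn (fun x => r * Real.exp (-(r*x)) * (1 - Real.exp (-(γ + β*x))))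
      (Ici (0:ℝ)) := by
    rwa [integrableOn_Ici_iff_integrableOn_Ioi]
  have hInd : Integrable (Set.indicator (Ici 0)
      (fun x => r * Real.exp (-(r*x)) * (1 - Real.exp (-(γ + β*x))))) := by
    rwa [integrable_indicator_iff measurableSet_Ici]
  have hnn : 0 ≤ᵐ[MeasureTheory.volume] Set.indicator (Ici 0)
      (fun x => r * Real.exp (-(r*x)) * (1 - Real.exp (-(γ + β*x)))) := by
    refine Filter.Eventually.of_forall fun x => ?_
    simp only [Pi.zero_apply]
    by_cases hx : x ∈ Ici (0:ℝ)
    · rw [Set.indicator_of_mem hx]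
      have hx0 : (0:ℝ) ≤ x := hx
      have h2 := hfac x hx0
      have h3 : 0 ≤ r * Real.exp (-(r*x)) := by positivity
      exact mul_nonneg h3 (by linarith)
    · rw [Set.indicator_of_notMem hx]
  rw [← ofReal_integral_eq_lintegral_ofReal hInd hnn]
  congr 1
  rw [integral_indicator measurableSet_Ici, integral_Ici_eq_integral_Ioi]
  have hpt2 : ∀ x : ℝ, r * Real.exp (-(r*x)) * (1 - Real.exp (-(γ + β*x)))
      = r * Real.exp (-(r*x)) - (r * Real.exp (-γ)) * Real.exp (-((r+β)*x)) := by
    intro x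
    have e : Real.exp (-(r*x)) * Real.exp (-(γ + β*x)) = Real.exp (-γ) * Real.exp (-((r+β)*x)) := by
      rw [← Real.exp_add, ← Real.exp_add]; congr 1; ring
    nlinarith [e]
  rw [setIntegral_congr_fun measurableSet_Ioi fun x _ => hpt2 x,
    integral_sub hint1' hint2', integral_const_mul, integral_const_mul,
    integral_exp_neg_mul_Ioi_zero hr, integral_exp_neg_mul_Ioi_zero hrb]
  have h1 : r * r⁻¹ = 1 := mul_inv_cancel₀ (ne_of_gt hr)
  have h2 : r * Real.exp (-γ) * (r+β)⁻¹ = Real.exp (-γ) * (1 + β*lam)⁻¹ := by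
    rw [hr_def]
    have hlam' : lam ≠ 0 := ne_of_gt hlam
    have hne1 : (1:ℝ)/lam + β ≠ 0 := by positivity
    have hne2 : (1:ℝ) + β*lam ≠ 0 := by positivity
    field_simp
  rw [h1, h2]

lemma expLaw_isProb {lam : ℝ} (hlam : 0 < lam) :
    IsProbabilityMeasure (MeasureTheory.volume.withDensity (exponentialPDF (1/lam))) := by
  constructor
  rw [withDensity_apply _ MeasurableSet.univ, setLIntegral_univ,
    lintegral_exponentialPDF_eq_one (by positivity)]

lemma expLaw_Iic {lam c : ℝ} (hlam : 0 < lam) (hc : 0 ≤ c) :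
    (MeasureTheory.volume.withDensity (exponentialPDF (1/lam))) (Iic c)
      = ENNReal.ofReal (1 - Real.exp (-(c/lam))) := by
  rw [withDensity_apply _ measurableSet_Iic,
    lintegral_exponentialPDF_eq_antiDeriv (by positivity) c, if_pos hc,
    show -(1/lam * c) = -(c/lam) by ring]

lemma expLaw_Iio_zero {r : ℝ} :
    (MeasureTheory.volume.withDensity (exponentialPDF r)) (Iio 0) = 0 := by
  rw [withDensity_apply _ measurableSet_Iio]
  exact lintegral_exponentialPDF_of_nonpos le_rfl

lemma pair_measure {μ lam η ρ a u w : ℝ} (hμ : 0 < μ) (hlam : 0 < lam) (hη : 0 < η) (hρ : 0 < ρ)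
    (ha : 0 < a) (hu : 0 < u) (hw : 0 < w) :
    ((MeasureTheory.volume.withDensity (exponentialPDF (1/μ))).prod
        (MeasureTheory.volume.withDensity (exponentialPDF (1/lam))))
      {p : ℝ × ℝ | η*ρ*p.1*w/(a*ρ*p.2+1) ≤ u}
    = ENNReal.ofReal (1 - (η*μ*w/(η*μ*w + a*lam*u)) * Real.exp (-u/(η*ρ*μ*w))) := by
  haveI := expLaw_isProb hμ
  haveI := expLaw_isProb hlam
  set γ : ℝ := u/(η*ρ*μ*w) with hγ_def
  set β : ℝ := a*u/(η*w*μ) with hβ_def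
  have hγ : 0 ≤ γ := by positivity
  have hβ : 0 ≤ β := by positivity
  have hS : MeasurableSet {p : ℝ × ℝ | η*ρ*p.1*w/(a*ρ*p.2+1) ≤ u} := by
    apply measurableSet_le _ measurable_const
    fun_prop
  rw [Measure.prod_apply_symm hS]
  have hae : ∀ᵐ x ∂(MeasureTheory.volume.withDensity (exponentialPDF (1/lam))), 0 ≤ x := by
    rw [ae_iff]
    have : {x : ℝ | ¬ 0 ≤ x} = Iio 0 := by ext x; simp only [mem_setOf_eq, mem_Iio, not_le]
    rw [this]; exact expLaw_Iio_zero
  have hcongr : ∀ᵐ x ∂(MeasureTheory.volume.withDensity (exponentialPDF (1/lam))),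
      (MeasureTheory.volume.withDensity (exponentialPDF (1/μ)))
        ((fun t => (t, x)) ⁻¹' {p : ℝ × ℝ | η*ρ*p.1*w/(a*ρ*p.2+1) ≤ u})
      = ENNReal.ofReal (1 - Real.exp (-(γ + β*x))) := by
    filter_upwards [hae] with x hx
    have hD : 0 < a*ρ*x+1 := by positivity
    have hset : ((fun t => (t, x)) ⁻¹' {p : ℝ × ℝ | η*ρ*p.1*w/(a*ρ*p.2+1) ≤ u})
        = Iic (u*(a*ρ*x+1)/(η*ρ*w)) := by
      ext t
      simp only [mem_preimage, mem_setOf_eq, mem_Iic]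
      rw [div_le_iff₀ hD, le_div_iff₀ (by positivity : (0:ℝ) < η*ρ*w)]
      constructor <;> intro h <;> nlinarith
    rw [hset, expLaw_Iic hμ (by positivity)]
    congr 2
    rw [hγ_def, hβ_def]
    field_simp
    ring
  rw [lintegral_congr_ae hcongr, exp_lintegral hlam hβ hγ]
  congr 1
  rw [hγ_def, hβ_def]
  have h1 : (1 + a*u/(η*w*μ)*lam)⁻¹ = η*μ*w/(η*μ*w + a*lam*u) := by
    rw [eq_div_iff (by positivity : η*μ*w + a*lam*u ≠ 0)]
    field_simp
  rw [h1]
  ring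

lemma joint_law {Ω ι : Type*} [MeasurableSpace Ω] [Fintype ι] (P : Measure Ω)
    [IsProbabilityMeasure P] {F : ι → Ω → ℝ} (hF : ∀ i, Measurable (F i))
    (h : iIndepFun F P) :
    P.map (fun ω i => F i ω) = Measure.pi (fun i => P.map (F i)) := by
  haveI : ∀ i, IsProbabilityMeasure (P.map (F i)) :=
    fun i => Measure.isProbabilityMeasure_map (hF i).aemeasurable
  refine (Measure.pi_eq fun s hs => ?_).symm
  rw [Measure.map_apply (measurable_pi_lambda _ hF) (MeasurableSet.univ_pi hs)]
  have hpre : (fun ω i => F i ω) ⁻¹' (Set.pi Set.univ s) = ⋂ i ∈ Finset.univ, F i ⁻¹' s i := by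
    ext ω; simp [Set.mem_pi]
  rw [hpre, h.measure_inter_preimage_eq_mul Finset.univ (fun i _ => hs i)]
  exact Finset.prod_congr rfl fun i _ => (Measure.map_apply (hF i) (hs i)).symm

theorem stmt_16 {Ω : Type*} [MeasurableSpace Ω] (P : Measure Ω) [IsProbabilityMeasure P]
    (M : ℕ) (hM : 1 ≤ M) (μ lam : Fin M → ℝ)
    (hμ : ∀ j, 0 < μ j) (hlam : ∀ j, 0 < lam j)
    (η ρ a u : ℝ) (hη : 0 < η) (hρ : 0 < ρ) (ha : 0 < a) (hu : 0 < u)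
    (W : Ω → ℝ) (hWmeas : Measurable W) (hWpos : ∀ᵐ ω ∂P, 0 < W ω)
    (T X : Fin M → Ω → ℝ)
    (hT : ∀ j, HasExpLaw P (T j) (μ j)) (hX : ∀ j, HasExpLaw P (X j) (lam j))
    (hindep : iIndepFun
      (Sum.elim (fun (_ : Unit) => W) (Sum.elim T X)) P) :
    (P {ω | ∃ j : Fin M, η * ρ * T j ω * W ω / (a * ρ * X j ω + 1) > u}).toReal =
      1 - ∫ ω, ∏ j : Fin M,
        (1 - (η * μ j * W ω / (η * μ j * W ω + a * lam j * u)) *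
          Real.exp (-u / (η * ρ * μ j * W ω))) ∂P := by
  classical
  have hTmeas : ∀ j, Measurable (T j) := fun j => (hT j).1
  have hXmeas : ∀ j, Measurable (X j) := fun j => (hX j).1
  set F : Unit ⊕ (Fin M ⊕ Fin M) → Ω → ℝ := Sum.elim (fun _ : Unit => W) (Sum.elim T X) with hF
  have hFmeas : ∀ i, Measurable (F i) := by
    rintro (i | j | j)
    exacts [hWmeas, hTmeas j, hXmeas j]
  haveI hTprob : ∀ j, IsProbabilityMeasure (P.map (T j)) :=
    fun j => Measure.isProbabilityMeasure_map (hTmeas j).aemeasurable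
  haveI hXprob : ∀ j, IsProbabilityMeasure (P.map (X j)) :=
    fun j => Measure.isProbabilityMeasure_map (hXmeas j).aemeasurable
  haveI hWprob : IsProbabilityMeasure (P.map W) :=
    Measure.isProbabilityMeasure_map hWmeas.aemeasurable
  haveI hνprob : ∀ i, IsProbabilityMeasure (P.map (F i)) :=
    fun i => Measure.isProbabilityMeasure_map (hFmeas i).aemeasurable
  set μpair : Fin M → Measure (ℝ × ℝ) := fun j => (P.map (T j)).prod (P.map (X j)) with hμpair
  haveI : ∀ j, IsProbabilityMeasure (μpair j) := fun j => by
    rw [hμpair]; infer_instance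
  set R : Measure (ℝ × (Fin M → ℝ × ℝ)) := (P.map W).prod (Measure.pi μpair) with hR
  -- measure preserving
  have mp0 : MeasurePreserving (fun ω i => F i ω) P (Measure.pi fun i => P.map (F i)) :=
    ⟨measurable_pi_lambda _ hFmeas, joint_law P hFmeas hindep⟩
  have mp1 := measurePreserving_sumPiEquivProdPi
    (μ := fun i => P.map (F i))
  have mpW : MeasurePreserving (MeasurableEquiv.funUnique Unit ℝ)
      (Measure.pi fun i : Unit => P.map (F (Sum.inl i))) (P.map W) :=
    measurePreserving_funUnique (P.map W) Unit
  have mp2 := measurePreserving_sumPiEquivProdPi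
    (μ := fun i => P.map (F (Sum.inr i)))
  have mp3 : MeasurePreserving (MeasurableEquiv.arrowProdEquivProdArrow ℝ ℝ (Fin M)).symm
      ((Measure.pi fun j => P.map (T j)).prod (Measure.pi fun j => P.map (X j)))
      (Measure.pi μpair) :=
    (measurePreserving_arrowProdEquivProdArrow ℝ ℝ (Fin M)
      (fun j => P.map (T j)) (fun j => P.map (X j))).symm
  have mp4 := (mpW.prod (mp3.comp mp2)).comp mp1
  have mpΨ := mp4.comp mp0
  set Ψ : Ω → ℝ × (Fin M → ℝ × ℝ) := fun ω => (W ω, fun j => (T j ω, X j ω)) with hΨ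
  have hΨeq : (Prod.map (MeasurableEquiv.funUnique Unit ℝ)
        ((MeasurableEquiv.arrowProdEquivProdArrow ℝ ℝ (Fin M)).symm ∘
          (MeasurableEquiv.sumPiEquivProdPi (fun _ : Fin M ⊕ Fin M => ℝ))) ∘
      (MeasurableEquiv.sumPiEquivProdPi (fun _ : Unit ⊕ (Fin M ⊕ Fin M) => ℝ))) ∘
      (fun ω (i : Unit ⊕ (Fin M ⊕ Fin M)) => F i ω) = Ψ := by
    rfl
  rw [hΨeq] at mpΨ
  -- events
  have hg : ∀ j : Fin M, Measurable fun ω => η * ρ * T j ω * W ω / (a * ρ * X j ω + 1) := by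
    intro j
    exact (((hTmeas j).const_mul (η*ρ)).mul hWmeas).div (((hXmeas j).const_mul (a*ρ)).add measurable_const)
  set E := {ω | ∃ j : Fin M, η * ρ * T j ω * W ω / (a * ρ * X j ω + 1) > u} with hE_def
  have hEmeas : MeasurableSet E := by
    have hEu : E = ⋃ j, {ω | η * ρ * T j ω * W ω / (a * ρ * X j ω + 1) > u} := by
      ext ω; simp [hE_def]
    rw [hEu]
    exact MeasurableSet.iUnion fun j => measurableSet_lt measurable_const (hg j)
  set A := {p : ℝ × (Fin M → ℝ × ℝ) | ∀ j, η*ρ*(p.2 j).1*p.1/(a*ρ*(p.2 j).2+1) ≤ u} with hA_def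
  have hAmeas : MeasurableSet A := by
    have hAi : A = ⋂ j, {p : ℝ × (Fin M → ℝ × ℝ) | η*ρ*(p.2 j).1*p.1/(a*ρ*(p.2 j).2+1) ≤ u} := by
      ext p; simp [hA_def]
    rw [hAi]
    refine MeasurableSet.iInter fun j => measurableSet_le ?_ measurable_const
    exact ((((Measurable.fst ((measurable_pi_apply j).comp measurable_snd)).const_mul (η*ρ)).mul
      measurable_fst)).div (((Measurable.snd ((measurable_pi_apply j).comp
      measurable_snd)).const_mul (a*ρ)).add measurable_const)
  have hpre : Ψ ⁻¹' A = Eᶜ := by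
    ext ω
    simp [hΨ, hA_def, hE_def, not_lt]
  have hPEc : P Eᶜ = ((P.map W).prod (Measure.pi μpair)) A := by
    rw [← hpre, ← Measure.map_apply mpΨ.measurable hAmeas, mpΨ.map_eq]
  have hslice : ∀ w : ℝ, Prod.mk w ⁻¹' A = Set.pi Set.univ
      (fun j => {p : ℝ × ℝ | η*ρ*p.1*w/(a*ρ*p.2+1) ≤ u}) := by
    intro w; ext q; simp [hA_def, Set.mem_pi]
  have haeW : ∀ᵐ w ∂(P.map W), 0 < w :=
    (ae_map_iff hWmeas.aemeasurable measurableSet_Ioi).2 hWpos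
  set φ : Fin M → ℝ → ℝ := fun j w => 1 - (η * μ j * w / (η * μ j * w + a * lam j * u)) *
    Real.exp (-u / (η * ρ * μ j * w)) with hφ_def
  have hval : ∀ᵐ w ∂(P.map W), (Measure.pi μpair) (Prod.mk w ⁻¹' A)
      = ∏ j, ENNReal.ofReal (φ j w) := by
    filter_upwards [haeW] with w hw
    rw [hslice w, Measure.pi_pi]
    refine Finset.prod_congr rfl fun j _ => ?_
    simp only [hμpair, hφ_def]
    rw [(hT j).2, (hX j).2, expPDF_eq_exponentialPDF, expPDF_eq_exponentialPDF]
    exact pair_measure (hμ j) (hlam j) hη hρ ha hu hw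
  have hPEc2 : P Eᶜ = ∫⁻ w, ∏ j, ENNReal.ofReal (φ j w) ∂(P.map W) := by
    rw [hPEc, Measure.prod_apply hAmeas]
    exact lintegral_congr_ae hval
  have hφ01 : ∀ (j : Fin M) (w : ℝ), 0 < w → 0 ≤ φ j w ∧ φ j w ≤ 1 := by
    intro j w hw
    have hd : 0 < η * μ j * w + a * lam j * u := by
      have := hμ j; have := hlam j; positivity
    have h1 : η * μ j * w / (η * μ j * w + a * lam j * u) ≤ 1 := by
      rw [div_le_one hd]
      nlinarith [mul_pos (mul_pos ha (hlam j)) hu]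
    have h1' : 0 ≤ η * μ j * w / (η * μ j * w + a * lam j * u) := by
      have := hμ j; have := hlam j; positivity
    have h2 : Real.exp (-u / (η * ρ * μ j * w)) ≤ 1 := by
      rw [Real.exp_le_one_iff]
      have hpos : 0 < η * ρ * μ j * w := by have := hμ j; positivity
      have := div_nonneg hu.le hpos.le
      rw [neg_div]; linarith
    have h2' : 0 ≤ Real.exp (-u / (η * ρ * μ j * w)) := (Real.exp_pos _).le
    constructor
    · simp only [hφ_def]; nlinarith
    · simp only [hφ_def]; nlinarith
  have hφmeas : ∀ j, Measurable (φ j) := by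
    intro j; simp only [hφ_def]; fun_prop
  have hprodmeas : Measurable fun w => ∏ j, φ j w :=
    Finset.measurable_prod _ (fun j _ => hφmeas j)
  have hnn : ∀ᵐ w ∂(P.map W), 0 ≤ ∏ j, φ j w := by
    filter_upwards [haeW] with w hw
    exact Finset.prod_nonneg fun j _ => (hφ01 j w hw).1
  have hRHS : ∫ ω, ∏ j, φ j (W ω) ∂P
      = (∫⁻ w, ∏ j, ENNReal.ofReal (φ j w) ∂(P.map W)).toReal := by
    rw [← integral_map hWmeas.aemeasurable hprodmeas.aestronglyMeasurable,
      integral_eq_lintegral_of_nonneg_ae hnn hprodmeas.aestronglyMeasurable]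
    congr 1
    refine lintegral_congr_ae ?_
    filter_upwards [haeW] with w hw
    rw [ENNReal.ofReal_prod_of_nonneg (fun j _ => (hφ01 j w hw).1)]
  have hsum : (P E).toReal + (P Eᶜ).toReal = 1 := by
    rw [← ENNReal.toReal_add (measure_ne_top P _) (measure_ne_top P _),
      measure_add_measure_compl hEmeas, measure_univ, ENNReal.toReal_one]
  have hfin : ∫ ω, ∏ j : Fin M, (1 - (η * μ j * W ω / (η * μ j * W ω + a * lam j * u)) *
      Real.exp (-u / (η * ρ * μ j * W ω))) ∂P = (P Eᶜ).toReal := by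
    rw [hPEc2, ← hRHS]
  rw [hfin]
  linarith
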